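/- Let W ≥ 0 be a total weight and let bins j = 1,…,m have capacities C_j > 0, fixed costs f_j ≥ 0, and unit costs c_j ≥ 0, with Σ_j C_j ≥ W. Define r_j = f_j/C_j + c_j. Then for any nonnegative loads l_1,…,l_m with l_j ≤ C_j for all j and Σ_j l_j = W, we have Σ_j r_j l_j ≥ Lb1, where Lb1 = Σ_{j=1}^{k-1} C_{a_j} r_{a_j} + (W − Σ_{j=1}^{k-1} C_{a_j}) r_{a_k}, the indices a_1,…,a_m sort the bins by non-decreasing r, and k is the minimum number of bins such that Σ_{j=1}^{k} C_{a_j} ≥ W. -/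

import Mathlib

open Finset

/-- Abel-summation based lemma: if `R` is nondecreasing and all proper prefix sums of `x`
are nonpositive while the total sum is zero, then `∑ R i * x i ≥ 0`. -/
lemma abel_nonneg (n : ℕ) (R x : ℕ → ℝ)
    (hR : ∀ i, i + 1 < n → R i ≤ R (i + 1))
    (hpre : ∀ t, t + 1 < n → ∑ i ∈ Finset.range (t + 1), x i ≤ 0)
    (htot : ∑ i ∈ Finset.range n, x i = 0) :
    0 ≤ ∑ i ∈ Finset.range n, R i * x i := by
  have h := Finset.sum_range_by_parts R x n
  simp only [smul_eq_mul] at h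
  rw [h, htot, mul_zero, zero_sub, neg_nonneg]
  apply Finset.sum_nonpos
  intro i hi
  rw [Finset.mem_range] at hi
  have h1 : i + 1 < n := by omega
  have h2 : R i ≤ R (i + 1) := hR i h1
  have h3 : ∑ j ∈ Finset.range (i + 1), x j ≤ 0 := hpre i h1
  exact mul_nonpos_of_nonneg_of_nonpos (by linarith) h3

/-- Conversion between filtered sums over `Fin m` and range sums over `ℕ`. -/
lemma filter_sum_eq_range (m s : ℕ) (hs : s ≤ m) (F : Fin m → ℝ) :
    ∑ j ∈ univ.filter (fun j : Fin m => (j : ℕ) < s), F j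
      = ∑ i ∈ Finset.range s, (if h : i < m then F ⟨i, h⟩ else 0) := by
  have h1 : ∑ i ∈ Finset.range s, (if h : i < m then F ⟨i, h⟩ else 0)
      = ∑ i ∈ Finset.range m, (if i < s then (if h : i < m then F ⟨i, h⟩ else 0) else 0) := by
    rw [← Finset.sum_filter]
    congr 1
    ext i
    simp only [Finset.mem_filter, Finset.mem_range]
    omega
  rw [Finset.sum_filter, h1,
    ← Fin.sum_univ_eq_sum_range (fun i => if i < s then (if h : i < m then F ⟨i, h⟩ else 0) else 0) m]
  apply Finset.sum_congr rfl
  intro j _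
  show (if (j : ℕ) < s then F j else 0)
      = if (j : ℕ) < s then (if h : (j : ℕ) < m then F ⟨(j : ℕ), h⟩ else 0) else 0
  by_cases hc : (j : ℕ) < s
  · rw [if_pos hc, if_pos hc, dif_pos j.isLt, Fin.eta]
  · rw [if_neg hc, if_neg hc]

theorem stmt0 (m : ℕ) (W : ℝ) (C f c : Fin m → ℝ)
    (hW : 0 ≤ W)
    (hC : ∀ j, 0 < C j) (hf : ∀ j, 0 ≤ f j) (hc : ∀ j, 0 ≤ c j)
    (hcap : W ≤ ∑ j, C j)
    (r : Fin m → ℝ) (hr : ∀ j, r j = f j / C j + c j)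
    (a : Equiv.Perm (Fin m)) (ha : Monotone fun j => r (a j))
    (k : Fin m)
    (hk : W ≤ ∑ j ∈ univ.filter (fun j => j ≤ k), C (a j))
    (hkmin : ∑ j ∈ univ.filter (fun j => j < k), C (a j) < W)
    (l : Fin m → ℝ) (hl0 : ∀ j, 0 ≤ l j) (hlC : ∀ j, l j ≤ C j)
    (hlW : ∑ j, l j = W) :
    (∑ j ∈ univ.filter (fun j => j < k), C (a j) * r (a j))
      + (W - ∑ j ∈ univ.filter (fun j => j < k), C (a j)) * r (a k)
      ≤ ∑ j, r j * l j := by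
  classical
  set kN : ℕ := (k : ℕ) with hkNdef
  have hkNm : kN < m := k.isLt
  -- ℕ-indexed versions of the data
  set D : ℕ → ℝ := fun i => if h : i < m then C (a ⟨i, h⟩) else 0 with hD
  set L : ℕ → ℝ := fun i => if h : i < m then l (a ⟨i, h⟩) else 0 with hL
  set R : ℕ → ℝ := fun i => if h : i < m then r (a ⟨i, h⟩) else 0 with hR
  set Spre : ℝ := ∑ j ∈ univ.filter (fun j => j < k), C (a j) with hSpre
  set g : ℕ → ℝ := fun i => if i < kN then D i else if i = kN then W - Spre else 0 with hg
  -- filter predicates as ℕ comparisons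
  have hfiltlt : (univ.filter (fun j : Fin m => j < k))
      = univ.filter (fun j : Fin m => (j : ℕ) < kN) := by
    apply Finset.filter_congr; intro j _
    show (j < k) ↔ ((j : ℕ) < kN)
    exact Iff.rfl
  -- Spre as a range sum
  have hSpreN : Spre = ∑ i ∈ Finset.range kN, D i := by
    rw [hSpre, hfiltlt, filter_sum_eq_range m kN (le_of_lt hkNm)]
  -- monotonicity of R on range m
  have hRmono : ∀ i, i + 1 < m → R i ≤ R (i + 1) := by
    intro i hi
    have h1 : i < m := by omega
    simp only [hR, dif_pos h1, dif_pos hi]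
    exact ha (show (⟨i, h1⟩ : Fin m) ≤ ⟨i + 1, hi⟩ from by simp [Fin.le_def])
  -- L bounded by D, nonneg
  have hLD : ∀ i, L i ≤ D i := by
    intro i
    by_cases h : i < m
    · simp only [hL, hD, dif_pos h]; exact hlC _
    · simp [hL, hD, dif_neg h]
  have hL0 : ∀ i, 0 ≤ L i := by
    intro i
    by_cases h : i < m
    · simp only [hL, dif_pos h]; exact hl0 _
    · simp [hL, dif_neg h]
  -- total of L is W
  have hLtot : ∑ i ∈ Finset.range m, L i = W := by
    rw [← Fin.sum_univ_eq_sum_range L m]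
    have : ∀ j : Fin m, L (j : ℕ) = l (a j) := by
      intro j
      show (if h : (j : ℕ) < m then l (a ⟨(j : ℕ), h⟩) else 0) = l (a j)
      rw [dif_pos j.isLt, Fin.eta]
    simp_rw [this]
    rw [Equiv.sum_comp a l]
    exact hlW
  have hgk : g kN = W - Spre := by
    show (if kN < kN then D kN else if kN = kN then W - Spre else 0) = W - Spre
    rw [if_neg (lt_irrefl kN), if_pos rfl]
  -- partial sums of g beyond kN equal W
  have hgW : ∀ s, kN < s → ∑ i ∈ Finset.range s, g i = W := by
    intro s hs
    have hsplit : Finset.range s = Finset.range (kN + 1) ∪ Finset.Ico (kN + 1) s := by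
      rw [Finset.range_eq_Ico]
      rw [Finset.range_eq_Ico]
      exact (Finset.Ico_union_Ico_eq_Ico (a := (0:ℕ)) (b := kN + 1) (c := s) (by omega) (by omega)).symm
    rw [hsplit, Finset.sum_union (by
      rw [Finset.range_eq_Ico]
      exact Finset.Ico_disjoint_Ico_consecutive 0 (kN + 1) s)]
    have h2 : ∑ i ∈ Finset.Ico (kN + 1) s, g i = 0 := by
      apply Finset.sum_eq_zero
      intro i hi
      rw [Finset.mem_Ico] at hi
      show (if i < kN then D i else if i = kN then W - Spre else 0) = 0
      rw [if_neg (by omega), if_neg (by omega)]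
    have h1 : ∑ i ∈ Finset.range (kN + 1), g i = W := by
      rw [Finset.sum_range_succ]
      have ha1 : ∀ i ∈ Finset.range kN, g i = D i := by
        intro i hi; rw [Finset.mem_range] at hi
        show (if i < kN then D i else if i = kN then W - Spre else 0) = D i
        rw [if_pos hi]
      rw [Finset.sum_congr rfl ha1, hgk, ← hSpreN]
      ring
    rw [h1, h2]; ring
  -- prefix sums of L - g are nonpositive
  have hpre : ∀ t, t + 1 < m → ∑ i ∈ Finset.range (t + 1), (L i - g i) ≤ 0 := by
    intro t ht
    rw [Finset.sum_sub_distrib, sub_nonpos]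
    by_cases hcase : t < kN
    · apply Finset.sum_le_sum
      intro i hi
      rw [Finset.mem_range] at hi
      have hikN : i < kN := by omega
      calc L i ≤ D i := hLD i
        _ = g i := by
            show D i = (if i < kN then D i else if i = kN then W - Spre else 0)
            rw [if_pos hikN]
    · rw [hgW (t + 1) (by omega)]
      calc ∑ i ∈ Finset.range (t + 1), L i ≤ ∑ i ∈ Finset.range m, L i :=
            Finset.sum_le_sum_of_subset_of_nonneg
              (Finset.range_subset_range.mpr (by omega)) (fun i _ _ => hL0 i)
        _ = W := hLtot
  -- total of L - g is zero
  have htot : ∑ i ∈ Finset.range m, (L i - g i) = 0 := by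
    rw [Finset.sum_sub_distrib, hLtot, hgW m hkNm]; ring
  -- Abel
  have habel : 0 ≤ ∑ i ∈ Finset.range m, R i * (L i - g i) :=
    abel_nonneg m R (fun i => L i - g i) hRmono hpre htot
  -- rewrite goal RHS
  have hRHS : ∑ j, r j * l j = ∑ i ∈ Finset.range m, R i * L i := by
    rw [← Equiv.sum_comp a (fun j => r j * l j), ← Fin.sum_univ_eq_sum_range (fun i => R i * L i) m]
    apply Finset.sum_congr rfl
    intro j _
    show r (a j) * l (a j)
        = (if h : (j : ℕ) < m then r (a ⟨(j : ℕ), h⟩) else 0)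
          * (if h : (j : ℕ) < m then l (a ⟨(j : ℕ), h⟩) else 0)
    rw [dif_pos j.isLt, dif_pos j.isLt, Fin.eta]
  -- rewrite goal LHS
  have hRg : ∑ i ∈ Finset.range m, R i * g i
      = (∑ j ∈ univ.filter (fun j => j < k), C (a j) * r (a j)) + (W - Spre) * r (a k) := by
    have hsplit : Finset.range m = Finset.range (kN + 1) ∪ Finset.Ico (kN + 1) m := by
      rw [Finset.range_eq_Ico]
      rw [Finset.range_eq_Ico]
      exact (Finset.Ico_union_Ico_eq_Ico (a := (0:ℕ)) (b := kN + 1) (c := m) (by omega) (by omega)).symm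
    rw [hsplit, Finset.sum_union (by
      rw [Finset.range_eq_Ico]
      exact Finset.Ico_disjoint_Ico_consecutive 0 (kN + 1) m)]
    have h2 : ∑ i ∈ Finset.Ico (kN + 1) m, R i * g i = 0 := by
      apply Finset.sum_eq_zero
      intro i hi
      rw [Finset.mem_Ico] at hi
      have : g i = 0 := by
        show (if i < kN then D i else if i = kN then W - Spre else 0) = 0
        rw [if_neg (by omega), if_neg (by omega)]
      rw [this, mul_zero]
    rw [h2, add_zero, Finset.sum_range_succ]
    have ha1 : ∀ i ∈ Finset.range kN, R i * g i
        = if h : i < m then C (a ⟨i, h⟩) * r (a ⟨i, h⟩) else 0 := by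
      intro i hi; rw [Finset.mem_range] at hi
      have him : i < m := by omega
      have hgi : g i = D i := by
        show (if i < kN then D i else if i = kN then W - Spre else 0) = D i
        rw [if_pos hi]
      show R i * g i = if h : i < m then C (a ⟨i, h⟩) * r (a ⟨i, h⟩) else 0
      rw [hgi, dif_pos him]
      show (if h : i < m then r (a ⟨i, h⟩) else 0) * (if h : i < m then C (a ⟨i, h⟩) else 0)
          = C (a ⟨i, him⟩) * r (a ⟨i, him⟩)
      rw [dif_pos him, dif_pos him, mul_comm]
    have hRk : R kN = r (a k) := by
      show (if h : kN < m then r (a ⟨kN, h⟩) else 0) = r (a k)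
      rw [dif_pos hkNm]
    rw [Finset.sum_congr rfl ha1, hgk, hRk, hfiltlt,
      filter_sum_eq_range m kN (le_of_lt hkNm)]
    ring
  -- conclude
  have hsum : ∑ i ∈ Finset.range m, R i * L i
      = ∑ i ∈ Finset.range m, R i * g i + ∑ i ∈ Finset.range m, R i * (L i - g i) := by
    rw [← Finset.sum_add_distrib]
    apply Finset.sum_congr rfl
    intro i _
    ring
  rw [hRHS, hsum, hRg]
  linarith
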